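/- Let q = 2^s, G ≤ O_{2m+1}(F_q) acting on S[z] as above, and suppose F ∈ S^G is an invariant with ns(F) = a^2 ξ̄_0 for some a ∈ S^G, where ns(F) is the sum of the non-square terms of F and ξ̄_0 = Σ_{i=1}^m x_i y_i. Define b ∈ S by b^2 = F + ns(F) (possible since F + ns(F) has only square terms and every element of F_q is a square). Then b is G_z-invariant and f := a z + b is G-invariant in S[z], and f^2 + a^2 ξ_0 = F. -/
import Mathlib


open MvPolynomial
open scoped Classical

/-- Variable index set for `S[z] = F_q[y_1,…,y_m,x_m,…,x_1,z]`:
`none` is `z`, `some (inl j)` is `y_j`, `some (inr j)` is `x_j`. -/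
abbrev OIdx (m : ℕ) := Option (Fin m ⊕ Fin m)

/-- The action of an invertible linear map `g` of `V = ι → F` on the polynomial
ring on `V`, so that `eval v (act g f) = eval (g v) f`. -/
noncomputable def act {F : Type*} [Field F] {ι : Type*} [Fintype ι] [DecidableEq ι]
    (g : (ι → F) ≃ₗ[F] (ι → F)) : MvPolynomial ι F →ₐ[F] MvPolynomial ι F :=
  MvPolynomial.aeval fun i => ∑ j, MvPolynomial.C (g (Pi.single j 1) i) * MvPolynomial.X j

/-- The inclusion `S = F_q[y_1,…,y_m,x_m,…,x_1] → S[z]`. -/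
noncomputable def emb (m : ℕ) (F : Type*) [Field F] :
    MvPolynomial (Fin m ⊕ Fin m) F →ₐ[F] MvPolynomial (OIdx m) F :=
  MvPolynomial.rename some

/-- The quadratic form `ξ_0 = z^2 + Σ x_j y_j`. -/
noncomputable def xiZero (m : ℕ) (F : Type*) [Field F] : MvPolynomial (OIdx m) F :=
  X none ^ 2 + ∑ j : Fin m, X (some (Sum.inr j)) * X (some (Sum.inl j))

/-- `ξ̄_0 = Σ_j x_j y_j ∈ S`. -/
noncomputable def xiBar (m : ℕ) (F : Type*) [Field F] : MvPolynomial (Fin m ⊕ Fin m) F :=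
  ∑ j : Fin m, X (Sum.inr j) * X (Sum.inl j)

/-- `ns F`: the sum of the non-square terms of a polynomial, i.e. the terms
whose monomial has some odd exponent. -/
noncomputable def nsPart {σ : Type*} {F : Type*} [Field F] (p : MvPolynomial σ F) :
    MvPolynomial σ F :=
  ∑ d ∈ p.support.filter (fun d => ¬ ∀ i, Even (d i)),
    MvPolynomial.monomial d (p.coeff d)

/-- If `F ∈ S^G` with `ns(F) = a^2 ξ̄_0` for some `a ∈ S^G`, and `b` is
determined by `b^2 = F + ns(F)`, then `b ∈ S^{G_z}`, `f := a z + b` is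
`G`-invariant, and `f^2 + a^2 ξ_0 = F`. -/
theorem stmt_11 {F : Type*} [Field F] [Fintype F] (s m q : ℕ) (hs : 1 ≤ s)
    (hq : q = 2 ^ s) (hF : Fintype.card F = q)
    (G : Subgroup ((OIdx m → F) ≃ₗ[F] (OIdx m → F)))
    (hG : ∀ g ∈ G, act g (xiZero m F) = xiZero m F)
    (Fp a b : MvPolynomial (Fin m ⊕ Fin m) F)
    (hFp : ∀ g ∈ G, act g (emb m F Fp) = emb m F Fp)
    (ha : ∀ g ∈ G, act g (emb m F a) = emb m F a)
    (hns : nsPart Fp = a ^ 2 * xiBar m F)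
    (hb : b ^ 2 = Fp + nsPart Fp) :
    (∀ g ∈ G, act g (X none) = (X none : MvPolynomial (OIdx m) F) →
      act g (emb m F b) = emb m F b) ∧
    (∀ g ∈ G, act g (emb m F a * X none + emb m F b)
      = emb m F a * X none + emb m F b) ∧
    (emb m F a * X none + emb m F b) ^ 2 + emb m F a ^ 2 * xiZero m F
      = emb m F Fp := by
  -- characteristic 2
  have h2 : (2 : F) = 0 := by
    have hcard : ((Fintype.card F : ℕ) : F) = 0 := FiniteField.cast_card_eq_zero F
    rw [hF, hq] at hcard
    push_cast at hcard
    exact pow_eq_zero_iff (by omega) |>.mp hcard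
  haveI : CharP F 2 := by
    have hd : ringChar F ∣ 2 := ringChar.dvd (by exact_mod_cast h2)
    rcases (Nat.dvd_prime Nat.prime_two).mp hd with h | h
    · exact absurd h (CharP.ringChar_ne_one)
    · rw [← h]; exact ringChar.charP F
  haveI : CharP (MvPolynomial (OIdx m) F) 2 := inferInstance
  set A := emb m F a with hA
  set B := emb m F b with hB
  set Φ := emb m F Fp with hΦ
  have hxibar : xiZero m F = X none ^ 2 + emb m F (xiBar m F) := by
    simp [xiZero, xiBar, emb, map_sum]
  have hb2 : B ^ 2 = Φ + A ^ 2 * emb m F (xiBar m F) := by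
    have h := congrArg (emb m F) hb
    rw [hns] at h
    simpa [map_add, map_mul, map_pow] using h
  have hf2 : (A * X none + B) ^ 2 = A ^ 2 * xiZero m F + Φ := by
    rw [CharTwo.add_sq, mul_pow, hb2, hxibar]
    ring
  have hsq : ∀ u v : MvPolynomial (OIdx m) F, u ^ 2 = v ^ 2 → u = v := by
    intro u v h
    have h0 : (u + v) ^ 2 = 0 := by
      rw [CharTwo.add_sq, h, CharTwo.add_self_eq_zero]
    have huv : u + v = 0 := pow_eq_zero_iff (two_ne_zero) |>.mp h0
    have := congrArg (· + v) huv
    simpa [add_assoc, CharTwo.add_self_eq_zero] using this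
  have hinv : ∀ g ∈ G, act g (A * X none + B) = A * X none + B := by
    intro g hg
    apply hsq
    rw [← map_pow, hf2, map_add, map_mul, map_pow, ha g hg, hG g hg, hFp g hg]
  refine ⟨?_, hinv, ?_⟩
  · intro g hg hz
    have hBeq : (A * X none + B) + A * X none = B := by
      rw [add_right_comm, CharTwo.add_self_eq_zero, zero_add]
    calc act g B = act g ((A * X none + B) + A * X none) := by rw [hBeq]
      _ = act g (A * X none + B) + act g A * act g (X none) := by
          rw [map_add, map_mul]
      _ = (A * X none + B) + A * X none := by rw [hinv g hg, ha g hg, hz]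
      _ = B := hBeq
  · rw [hf2, add_comm (A ^ 2 * xiZero m F) Φ, add_assoc, CharTwo.add_self_eq_zero,
      add_zero]
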